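/- Let n ≥ 1 be a natural number, 1 < p < q, and 0 < ω < ω_{p,q}. Then there exists B > 0 such that Σ(u) < 0 for u ∈ (0,B), and either Σ(u) > 0 for all u ∈ (B,∞), or there exists C > B such that Σ(u) > 0 for u ∈ (B,C) and Σ(u) < 0 for u ∈ (C,∞). -/

import Mathlib

/-- `σ = n/(p+1) - (n-2)/2`. -/
noncomputable def sigma (n : ℕ) (p : ℝ) : ℝ := n / (p + 1) - ((n : ℝ) - 2) / 2

/-- `τ = n/(q+1) - (n-2)/2`. -/
noncomputable def tau (n : ℕ) (q : ℝ) : ℝ := n / (q + 1) - ((n : ℝ) - 2) / 2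

/-- The Pohozaev polynomial `Σ(u) = -2ω u² + 2σ u^{p+1} - 2τ u^{q+1}`. -/
noncomputable def Sig (n : ℕ) (ω p q u : ℝ) : ℝ :=
  -2 * ω * u ^ 2 + 2 * sigma n p * u ^ (p + 1) - 2 * tau n q * u ^ (q + 1)

/-- The critical frequency `ω_{p,q}`. -/
noncomputable def omegaPQ (p q : ℝ) : ℝ :=
  (2 * (q - p) / ((p + 1) * (q - 1))) *
    (((p - 1) * (q + 1)) / ((p + 1) * (q - 1))) ^ ((p - 1) / (q - p))

open Set Real Filter Topology

lemma log_aux (c x y : ℝ) (hx : 0 < x) (hxy : x < y) (hcy : 0 < 1 + c * y) :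
    x * Real.log (1 + c * y) ≤ y * Real.log (1 + c * x) := by
  have hy : 0 < y := hx.trans hxy
  have hcx : 0 < 1 + c * x := by
    rcases le_or_gt 0 c with h | h
    · nlinarith
    · nlinarith
  have hconc := (strictConcaveOn_log_Ioi.concaveOn).2 (mem_Ioi.mpr hcy)
    (mem_Ioi.mpr (zero_lt_one))
    (show (0:ℝ) ≤ x / y by positivity) (show (0:ℝ) ≤ (y - x) / y from div_nonneg (by linarith) hy.le)
    (show x / y + (y - x) / y = 1 by field_simp; ring)
  have harg : (x / y) • (1 + c * y) + ((y - x) / y) • (1 : ℝ) = 1 + c * x := by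
    simp only [smul_eq_mul]; field_simp; ring
  rw [harg] at hconc
  simp only [smul_eq_mul, Real.log_one, mul_zero, add_zero] at hconc
  have := mul_le_mul_of_nonneg_left hconc hy.le
  calc x * Real.log (1 + c * y) = y * (x / y * Real.log (1 + c * y)) := by field_simp
    _ ≤ y * Real.log (1 + c * x) := this

lemma key_ineq (p q : ℝ) (n : ℕ) (hp : 1 < p) (hpq : p < q) (hτ : 0 < tau n q) :
    ∃ v : ℝ, 0 < v ∧ omegaPQ p q ≤ sigma n p * v - tau n q * v ^ ((q - 1) / (p - 1)) := by
  have hp1 : (0:ℝ) < p + 1 := by linarith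
  have hq1 : (0:ℝ) < q + 1 := by linarith
  have hpm : (0:ℝ) < p - 1 := by linarith
  have hqm : (0:ℝ) < q - 1 := by linarith
  have hqp : (0:ℝ) < q - p := by linarith
  set c : ℝ := -(((n : ℝ) - 2) / 4) with hc
  set s : ℝ := 1 + c * (p - 1) with hs_def
  set t : ℝ := 1 + c * (q - 1) with ht_def
  have hs_eq : sigma n p = 2 * s / (p + 1) := by
    rw [hs_def, hc]; unfold sigma; field_simp; ring
  have ht_eq : tau n q = 2 * t / (q + 1) := by
    rw [ht_def, hc]; unfold tau; field_simp; ring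
  have ht : 0 < t := by
    have := hτ; rw [ht_eq] at this
    have := (div_pos_iff.mp this)
    rcases this with ⟨h1, _⟩ | ⟨_, h2⟩
    · linarith
    · linarith
  have hs : 0 < s := by
    rcases le_or_gt 0 c with h | h
    · nlinarith
    · nlinarith [ht]
  set K : ℝ := ((p - 1) * (q + 1)) / ((p + 1) * (q - 1)) with hK_def
  have hK : 0 < K := by apply div_pos <;> nlinarith
  set β : ℝ := (p - 1) / (q - p) with hβ_def
  have hβ : 0 < β := by positivity
  set A : ℝ := s / t * K with hA_def
  have hA : 0 < A := by positivity
  set v : ℝ := A ^ β with hv_def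
  have hv : 0 < v := Real.rpow_pos_of_pos hA β
  refine ⟨v, hv, ?_⟩
  -- v ^ r = v * A
  have hvr : v ^ ((q - 1) / (p - 1)) = v * A := by
    rw [hv_def, ← Real.rpow_mul hA.le,
      show β * ((q - 1) / (p - 1)) = β + 1 by rw [hβ_def]; field_simp; ring,
      Real.rpow_add_one hA.ne']
  -- main log inequality : 1 ≤ (s/t)^β * s
  have hlog := log_aux c (p - 1) (q - 1) hpm (by linarith) (by rw [← ht_def]; exact ht)
  rw [← hs_def, ← ht_def] at hlog
  have h1le : (1 : ℝ) ≤ (s / t) ^ β * s := by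
    have hst : 0 < s / t := by positivity
    have heq : (s / t) ^ β * s =
        Real.exp (((q - 1) * Real.log s - (p - 1) * Real.log t) / (q - p)) := by
      rw [Real.rpow_def_of_pos hst, Real.log_div hs.ne' ht.ne']
      rw [← Real.exp_log hs]
      rw [← Real.exp_add]
      congr 1
      rw [Real.log_exp, hβ_def]
      field_simp; ring
    rw [heq]
    exact Real.one_le_exp (div_nonneg (by linarith) hqp.le)
  -- assemble
  have hAβ : v = (s / t) ^ β * K ^ β := by
    rw [hv_def, hA_def]; exact Real.mul_rpow (by positivity) hK.le
  have hτA : tau n q * A = (2 * s / (p + 1)) * ((p - 1) / (q - 1)) := by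
    rw [ht_eq, hA_def, hK_def]; field_simp
  have homega : omegaPQ p q = 1 * (K ^ β * (2 * (q - p) / ((p + 1) * (q - 1)))) := by
    rw [omegaPQ, hK_def, hβ_def]; ring
  have hP : 0 < K ^ β * (2 * (q - p) / ((p + 1) * (q - 1))) := by
    apply mul_pos (Real.rpow_pos_of_pos hK β)
    apply div_pos (by linarith) (by nlinarith)
  calc omegaPQ p q = 1 * (K ^ β * (2 * (q - p) / ((p + 1) * (q - 1)))) := homega
    _ ≤ ((s / t) ^ β * s) * (K ^ β * (2 * (q - p) / ((p + 1) * (q - 1)))) :=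
        mul_le_mul_of_nonneg_right h1le hP.le
    _ = sigma n p * v - tau n q * (v * A) := by
        rw [hs_eq, show tau n q * (v * A) = v * (tau n q * A) from by ring, hτA, hAβ]
        field_simp; ring
    _ = sigma n p * v - tau n q * v ^ ((q - 1) / (p - 1)) := by rw [hvr]

set_option maxHeartbeats 1000000 in
/-- Theorem 1: for `n ≥ 1`, `1 < p < q` and `0 < ω < ω_{p,q}` there is `B > 0` with
`Σ < 0` on `(0,B)` and `Σ > 0` on `(B,C)` where either `C = ∞` or `C` is finite with
`Σ < 0` on `(C,∞)`. -/
theorem Sigma_sign_structure (p q ω : ℝ) (n : ℕ) (hn : 1 ≤ n)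
    (hp : 1 < p) (hpq : p < q)
    (hω : 0 < ω) (hωpq : ω < omegaPQ p q) :
    ∃ B : ℝ, 0 < B ∧
      (∀ u, 0 < u → u < B → Sig n ω p q u < 0) ∧
      ((∀ u, B < u → 0 < Sig n ω p q u) ∨
        (∃ C : ℝ, B < C ∧
          (∀ u, B < u → u < C → 0 < Sig n ω p q u) ∧
          (∀ u, C < u → Sig n ω p q u < 0))) := by
  have hp1 : (0:ℝ) < p - 1 := by linarith
  have hq1 : (0:ℝ) < q - 1 := by linarith
  set r : ℝ := (q - 1) / (p - 1) with hr_def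
  have hr : 1 < r := by rw [hr_def, lt_div_iff₀ hp1]; linarith
  set H : ℝ → ℝ := fun v => -2 * ω + 2 * sigma n p * v - 2 * tau n q * v ^ r with hH_def
  -- transfer from u to v = u^(p-1)
  have htrans : ∀ u : ℝ, 0 < u → Sig n ω p q u = u ^ 2 * H (u ^ (p - 1)) := by
    intro u hu
    have e1 : u ^ (p + 1) = u ^ 2 * u ^ (p - 1) := by
      rw [← Real.rpow_natCast u 2, ← Real.rpow_add hu,
        show ((2:ℕ):ℝ) + (p - 1) = p + 1 by push_cast; ring]
    have e2 : u ^ (q + 1) = u ^ 2 * (u ^ (p - 1)) ^ r := by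
      rw [← Real.rpow_mul hu.le, ← Real.rpow_natCast u 2, ← Real.rpow_add hu,
        show ((2:ℕ):ℝ) + (p - 1) * r = q + 1 by rw [hr_def]; push_cast; field_simp; ring]
    simp only [Sig, hH_def, e1, e2]; ring
  have hσgtτ : tau n q < sigma n p := by
    have hn' : (1:ℝ) ≤ (n:ℝ) := by exact_mod_cast hn
    have hdiff : sigma n p - tau n q = (n:ℝ) * (q - p) / ((p + 1) * (q + 1)) := by
      have h1 : p + 1 ≠ 0 := by linarith
      have h2 : q + 1 ≠ 0 := by linarith
      unfold sigma tau; field_simp; ring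
    have hpos : 0 < (n:ℝ) * (q - p) / ((p + 1) * (q + 1)) :=
      div_pos (mul_pos (by linarith) (by linarith)) (mul_pos (by linarith) (by linarith))
    linarith
  -- factored form of H
  have hfacG : ∀ v : ℝ, 0 < v →
      H v = -2 * ω + 2 * v * (sigma n p - tau n q * v ^ (r - 1)) := by
    intro v hv
    have hvv : v ^ r = v * v ^ (r - 1) := by
      rw [show r = 1 + (r - 1) by ring, Real.rpow_add hv, Real.rpow_one]; ring_nf
    simp only [hH_def, hvv]; ring
  -- small v negativity
  have hsmall : ∃ δ : ℝ, 0 < δ ∧ ∀ v : ℝ, 0 < v → v < δ → H v < 0 := by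
    have h1 : Tendsto (fun v : ℝ => v ^ r) (𝓝 (0:ℝ)) (𝓝 (0:ℝ)) := by
      have := (Real.continuousAt_rpow_const 0 r (Or.inr (by linarith))).tendsto
      rwa [Real.zero_rpow (by linarith : r ≠ 0)] at this
    have h0 : Tendsto H (𝓝[>] (0:ℝ)) (𝓝 (-2 * ω)) := by
      have : Tendsto H (𝓝 (0:ℝ))
          (𝓝 (-2 * ω + 2 * sigma n p * 0 - 2 * tau n q * 0)) := by
        simp only [hH_def]
        exact (tendsto_const_nhds.add (tendsto_id.const_mul _)).sub (h1.const_mul _)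
      simpa using this.mono_left nhdsWithin_le_nhds
    have hev : ∀ᶠ v in 𝓝[>] (0:ℝ), H v < 0 :=
      Filter.Tendsto.eventually_lt_const (by linarith : -2 * ω < (0:ℝ)) h0
    rcases mem_nhdsGT_iff_exists_Ioo_subset.mp hev with ⟨δ, hδ, hsub⟩
    exact ⟨δ, mem_Ioi.mp hδ, fun v hv1 hv2 => hsub ⟨hv1, hv2⟩⟩
  obtain ⟨δ, hδpos, hδ⟩ := hsmall
  set S : Set ℝ := {v | 0 < v ∧ 0 ≤ H v} with hS_def
  have hSlb : ∀ v ∈ S, δ ≤ v := by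
    intro v hv
    by_contra hlt
    push_neg at hlt
    exact absurd hv.2 (not_le.mpr (hδ v hv.1 hlt))
  have hbddb : BddBelow S := ⟨δ, hSlb⟩
  -- generic left part
  have hBpow : ∀ x : ℝ, 0 < x → (x ^ (p-1)⁻¹) ^ (p - 1) = x :=
    fun x hx => Real.rpow_inv_rpow hx.le (ne_of_gt hp1)
  rcases le_or_gt (tau n q) 0 with hτ | hτ
  · -- Case I : τ ≤ 0
    have hfactA : ∀ v₁ v₂ : ℝ, 0 < v₁ → v₁ < v₂ → 0 ≤ H v₁ → H v₁ < H v₂ := by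
      intro v₁ v₂ h1 h12 hH1
      have h2 : 0 < v₂ := h1.trans h12
      rw [hfacG v₁ h1] at hH1 ⊢
      rw [hfacG v₂ h2]
      have hφ1 : 0 < sigma n p - tau n q * v₁ ^ (r - 1) := by
        by_contra hcon
        push_neg at hcon
        nlinarith [mul_nonpos_of_nonneg_of_nonpos (by linarith : (0:ℝ) ≤ 2 * v₁) hcon]
      have hrm : v₁ ^ (r - 1) ≤ v₂ ^ (r - 1) :=
        Real.rpow_le_rpow h1.le h12.le (by linarith)
      have hmono : sigma n p - tau n q * v₁ ^ (r-1) ≤ sigma n p - tau n q * v₂ ^ (r-1) := by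
        nlinarith
      nlinarith [mul_pos h1 hφ1]
    have hbig : ∃ v₀ : ℝ, 0 < v₀ ∧ 0 < H v₀ := by
      rcases eq_or_lt_of_le hτ with heq | hlt
      · have hσ : 0 < sigma n p := by rw [heq] at hσgtτ; exact hσgtτ
        refine ⟨(ω + 1) / sigma n p, by positivity, ?_⟩
        have hne : sigma n p ≠ 0 := ne_of_gt hσ
        simp only [hH_def, heq]
        have : 2 * sigma n p * ((ω + 1) / sigma n p) = 2 * (ω + 1) := by field_simp
        rw [this]
        simp only [heq] at *
        nlinarith
      · have hφt : Tendsto (fun v : ℝ => sigma n p + (-(tau n q)) * v ^ (r - 1)) atTop atTop :=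
          tendsto_atTop_add_const_left _ _
            ((tendsto_rpow_atTop (by linarith : (0:ℝ) < r - 1)).const_mul_atTop
              (by linarith : (0:ℝ) < -(tau n q)))
        obtain ⟨v₀, hφ₀, hv₀⟩ := ((hφt.eventually_ge_atTop (ω + 1)).and
          (eventually_ge_atTop (1:ℝ))).exists
        refine ⟨v₀, by linarith, ?_⟩
        rw [hfacG v₀ (by linarith)]
        have h2 : 1 * (ω + 1) ≤ v₀ * (sigma n p + (-(tau n q)) * v₀ ^ (r - 1)) :=
          mul_le_mul hv₀ hφ₀ (by linarith) (by linarith)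
        nlinarith
    obtain ⟨v₀, hv₀pos, hv₀⟩ := hbig
    have hne : S.Nonempty := ⟨v₀, hv₀pos, hv₀.le⟩
    have hB'pos : 0 < sInf S := lt_of_lt_of_le hδpos (le_csInf hne hSlb)
    refine ⟨(sInf S) ^ (p-1)⁻¹, Real.rpow_pos_of_pos hB'pos _, ?_, Or.inl ?_⟩
    · intro u hu huB
      have hv : u ^ (p - 1) < sInf S := by
        rw [← hBpow (sInf S) hB'pos]
        exact (Real.rpow_lt_rpow_iff hu.le (Real.rpow_pos_of_pos hB'pos _).le hp1).mpr huB
      have hvpos : 0 < u ^ (p - 1) := Real.rpow_pos_of_pos hu _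
      have hHneg : H (u ^ (p - 1)) < 0 := by
        by_contra hcon
        push_neg at hcon
        exact absurd (csInf_le hbddb (⟨hvpos, hcon⟩ : u ^ (p-1) ∈ S)) (not_le.mpr hv)
      rw [htrans u hu]
      exact mul_neg_of_pos_of_neg (by positivity) hHneg
    · intro u hBu
      have hu : 0 < u := (Real.rpow_pos_of_pos hB'pos _).trans hBu
      have hv : sInf S < u ^ (p - 1) := by
        rw [← hBpow (sInf S) hB'pos]
        exact (Real.rpow_lt_rpow_iff (Real.rpow_pos_of_pos hB'pos _).le hu.le hp1).mpr hBu
      obtain ⟨v₁, hv₁S, hv₁lt⟩ := exists_lt_of_csInf_lt hne hv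
      have hHpos : 0 < H (u ^ (p - 1)) :=
        lt_of_le_of_lt hv₁S.2 (hfactA v₁ _ hv₁S.1 hv₁lt hv₁S.2)
      rw [htrans u hu]
      exact mul_pos (by positivity) hHpos
  · -- Case II : τ > 0
    have hσ : 0 < sigma n p := hτ.trans hσgtτ
    obtain ⟨w, hwpos, hkey⟩ := key_ineq p q n hp hpq hτ
    rw [← hr_def] at hkey
    have hHw : 0 < H w := by
      simp only [hH_def]; linarith
    -- bounded above
    have hub : ∀ v ∈ S, v ≤ max 1 ((sigma n p / tau n q) ^ (r-1)⁻¹) := by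
      intro v hv
      by_contra hcon
      push_neg at hcon
      have h1 : 1 < v := lt_of_le_of_lt (le_max_left _ _) hcon
      have h2 : (sigma n p / tau n q) ^ (r-1)⁻¹ < v := lt_of_le_of_lt (le_max_right _ _) hcon
      have hd : (0:ℝ) ≤ sigma n p / tau n q := by positivity
      have h3 : sigma n p / tau n q < v ^ (r - 1) := by
        calc sigma n p / tau n q
            = ((sigma n p / tau n q) ^ (r-1)⁻¹) ^ (r - 1) :=
              (Real.rpow_inv_rpow hd (by linarith : r - 1 ≠ 0)).symm
          _ < v ^ (r - 1) := Real.rpow_lt_rpow (Real.rpow_nonneg hd _) h2 (by linarith)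
      have h4 : sigma n p < tau n q * v ^ (r - 1) := by
        rw [div_lt_iff₀ hτ] at h3
        nlinarith [h3]
      have hHneg : H v < 0 := by
        rw [hfacG v (by linarith)]
        nlinarith [mul_pos (show (0:ℝ) < v by linarith)
          (show 0 < tau n q * v ^ (r-1) - sigma n p by linarith)]
      linarith [hv.2]
    have hbdda : BddAbove S := ⟨_, hub⟩
    have hne : S.Nonempty := ⟨w, hwpos, hHw.le⟩
    have hB'pos : 0 < sInf S := lt_of_lt_of_le hδpos (le_csInf hne hSlb)
    -- two points around w via continuity
    have hcont : ContinuousAt H w := by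
      have h1 : ContinuousAt (fun v : ℝ => v ^ r) w :=
        Real.continuousAt_rpow_const _ _ (Or.inl (ne_of_gt hwpos))
      show ContinuousAt (fun v => -2 * ω + 2 * sigma n p * v - 2 * tau n q * v ^ r) w
      exact (continuousAt_const.add (continuousAt_id.const_mul _)).sub (h1.const_mul _)
    have hevent : ∀ᶠ v in 𝓝 w, 0 < H v := hcont.eventually (eventually_gt_nhds hHw)
    rcases Metric.eventually_nhds_iff.mp hevent with ⟨ε, hε, hball⟩
    set e : ℝ := min ε w with he_def
    have he : 0 < e := lt_min hε hwpos
    have hew : e ≤ w := min_le_right _ _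
    have heε : e ≤ ε := min_le_left _ _
    have hmem1 : w + e/2 ∈ S := by
      refine ⟨by linarith, (hball ?_).le⟩
      rw [Real.dist_eq, show w + e/2 - w = e/2 by ring, abs_of_pos (by linarith)]
      linarith
    have hmem2 : w - e/2 ∈ S := by
      refine ⟨by linarith, (hball ?_).le⟩
      rw [Real.dist_eq, show w - e/2 - w = -(e/2) by ring, abs_neg, abs_of_pos (by linarith)]
      linarith
    have hBC : sInf S < sSup S :=
      calc sInf S ≤ w - e/2 := csInf_le hbddb hmem2
        _ < w + e/2 := by linarith
        _ ≤ sSup S := le_csSup hbdda hmem1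
    have hC'pos : 0 < sSup S := hB'pos.trans hBC
    refine ⟨(sInf S) ^ (p-1)⁻¹, Real.rpow_pos_of_pos hB'pos _, ?_,
      Or.inr ⟨(sSup S) ^ (p-1)⁻¹, ?_, ?_, ?_⟩⟩
    · intro u hu huB
      have hv : u ^ (p - 1) < sInf S := by
        rw [← hBpow (sInf S) hB'pos]
        exact (Real.rpow_lt_rpow_iff hu.le (Real.rpow_pos_of_pos hB'pos _).le hp1).mpr huB
      have hvpos : 0 < u ^ (p - 1) := Real.rpow_pos_of_pos hu _
      have hHneg : H (u ^ (p - 1)) < 0 := by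
        by_contra hcon
        push_neg at hcon
        exact absurd (csInf_le hbddb (⟨hvpos, hcon⟩ : u ^ (p-1) ∈ S)) (not_le.mpr hv)
      rw [htrans u hu]
      exact mul_neg_of_pos_of_neg (by positivity) hHneg
    · exact Real.rpow_lt_rpow hB'pos.le hBC (by positivity)
    · intro u hBu huC
      have hu : 0 < u := (Real.rpow_pos_of_pos hB'pos _).trans hBu
      have hv1 : sInf S < u ^ (p - 1) := by
        rw [← hBpow (sInf S) hB'pos]
        exact (Real.rpow_lt_rpow_iff (Real.rpow_pos_of_pos hB'pos _).le hu.le hp1).mpr hBu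
      have hv2 : u ^ (p - 1) < sSup S := by
        rw [← hBpow (sSup S) hC'pos]
        exact (Real.rpow_lt_rpow_iff hu.le (Real.rpow_pos_of_pos hC'pos _).le hp1).mpr huC
      obtain ⟨x, hxS, hxlt⟩ := exists_lt_of_csInf_lt hne hv1
      obtain ⟨y, hyS, hylt⟩ := exists_lt_of_lt_csSup hne hv2
      set v : ℝ := u ^ (p - 1) with hv_def
      have hxy : x < y := hxlt.trans hylt
      set a : ℝ := (y - v) / (y - x) with ha_def
      set b : ℝ := (v - x) / (y - x) with hb_def
      have ha : 0 < a := div_pos (by linarith) (by linarith)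
      have hb : 0 < b := div_pos (by linarith) (by linarith)
      have hxyne : y - x ≠ 0 := ne_of_gt (by linarith)
      have hab : a + b = 1 := by
        rw [ha_def, hb_def, ← add_div, show y - v + (v - x) = y - x by ring, div_self hxyne]
      have hcomb : a * x + b * y = v := by
        have h1 : a * x + b * y = ((y - v) * x + (v - x) * y) / (y - x) := by
          rw [ha_def, hb_def]; ring
        rw [h1, show (y - v) * x + (v - x) * y = v * (y - x) by ring,
          mul_div_assoc, div_self hxyne, mul_one]
      have hconv := (strictConvexOn_rpow hr).2 (mem_Ici.mpr hxS.1.le)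
        (mem_Ici.mpr (hxS.1.trans hxy).le) (ne_of_lt hxy) ha hb hab
      simp only [smul_eq_mul] at hconv
      rw [hcomb] at hconv
      have hHx : 0 ≤ H x := hxS.2
      have hHy : 0 ≤ H y := hyS.2
      have hHv : 0 < H v := by
        simp only [hH_def] at hHx hHy ⊢
        nlinarith [mul_nonneg ha.le hHx, mul_nonneg hb.le hHy,
          mul_lt_mul_of_pos_left hconv (by linarith : (0:ℝ) < 2 * tau n q)]
      rw [htrans u hu]
      exact mul_pos (by positivity) hHv
    · intro u hCu
      have hu : 0 < u := (Real.rpow_pos_of_pos hC'pos _).trans hCu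
      have hv : sSup S < u ^ (p - 1) := by
        rw [← hBpow (sSup S) hC'pos]
        exact (Real.rpow_lt_rpow_iff (Real.rpow_pos_of_pos hC'pos _).le hu.le hp1).mpr hCu
      have hvpos : 0 < u ^ (p - 1) := Real.rpow_pos_of_pos hu _
      have hHneg : H (u ^ (p - 1)) < 0 := by
        by_contra hcon
        push_neg at hcon
        exact absurd (le_csSup hbdda (⟨hvpos, hcon⟩ : u ^ (p-1) ∈ S)) (not_le.mpr hv)
      rw [htrans u hu]
      exact mul_neg_of_pos_of_neg (by positivity) hHneg
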